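/- arXiv:1911.10408 — 4 statements merged into one kernel-verified Lean document; each statement's English description precedes it below -/
import Mathlib

section
/- Let β > 0, γ > 0, k ∈ ℝ, and let s > 0 be a real number with s^β > |k|. Then ∫₀^∞ e^{-st} t^{γ-1} E_{β,γ}(k t^β) dt = s^{β-γ} / (s^β - k). -/
open MeasureTheory

/-- The two-parameter Mittag-Leffler function `E_{β,γ}(z) = Σ_{r=0}^∞ z^r / Γ(βr + γ)`. -/
noncomputable def mittagLeffler (β γ z : ℝ) : ℝ :=
  ∑' r : ℕ, z ^ r / Real.Gamma (β * r + γ)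

lemma mittagLeffler' (β γ z : ℝ) :
    mittagLeffler β γ z = ∑' r : ℕ, z ^ r / Real.Gamma (β * r + γ) := rfl

open Set Real in
/-- **Laplace transform of `t^(γ-1) E_{β,γ}(k t^β)`.**
For `β, γ > 0`, `k ∈ ℝ` and real `s > 0` with `s^β > |k|`,
`∫₀^∞ e^(-st) t^(γ-1) E_{β,γ}(k t^β) dt = s^(β-γ) / (s^β - k)`. -/
theorem laplace_mittagLeffler (β γ k s : ℝ) (hβ : 0 < β) (hγ : 0 < γ)
    (hs : 0 < s) (hks : |k| < s ^ β) :
    ∫ t in Set.Ioi (0:ℝ),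
        Real.exp (-s * t) * t ^ (γ - 1) * mittagLeffler β γ (k * t ^ β)
      = s ^ (β - γ) / (s ^ β - k) := by
  have hsb : (0:ℝ) < s ^ β := Real.rpow_pos_of_pos hs β
  have hsbk : (0:ℝ) < s ^ β - k := by
    have := (abs_lt.mp hks).2; linarith
  set F : ℕ → ℝ → ℝ := fun r t =>
    (k ^ r / Real.Gamma (β * r + γ)) * (t ^ (β * r + γ - 1) * Real.exp (-(s * t))) with hF
  have ha : ∀ r : ℕ, (0:ℝ) < β * r + γ := fun r => by positivity
  have hGpos : ∀ r : ℕ, 0 < Real.Gamma (β * r + γ) := fun r => Real.Gamma_pos_of_pos (ha r)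
  have hint : ∀ r : ℕ,
      IntegrableOn (fun t : ℝ => t ^ (β * r + γ - 1) * Real.exp (-(s * t))) (Ioi 0) := by
    intro r
    have := integrableOn_rpow_mul_exp_neg_mul_rpow (p := 1) (s := β * r + γ - 1) (b := s)
      (by linarith [ha r]) one_pos hs
    simpa [Real.rpow_one] using this
  have hFint : ∀ r : ℕ, IntegrableOn (F r) (Ioi 0) := fun r => (hint r).const_mul _
  have hval : ∀ r : ℕ, ∫ t in Ioi (0:ℝ), t ^ (β * r + γ - 1) * Real.exp (-(s * t))
      = (1 / s) ^ (β * r + γ) * Real.Gamma (β * r + γ) :=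
    fun r => Real.integral_rpow_mul_exp_neg_mul_Ioi (ha r) hs
  have hinv : (1 / s : ℝ) ^ β = 1 / s ^ β := by
    rw [Real.div_rpow zero_le_one hs.le, Real.one_rpow]
  have hpow : ∀ (c : ℝ) (r : ℕ), (1 / s : ℝ) ^ (β * r + γ) * c ^ r
      = (1 / s) ^ γ * (c * (1 / s) ^ β) ^ r := by
    intro c r
    rw [Real.rpow_add (by positivity : (0:ℝ) < 1 / s), mul_pow,
      Real.rpow_mul (by positivity : (0:ℝ) ≤ 1 / s), Real.rpow_natCast]
    ring
  have hFval : ∀ r : ℕ, ∫ t in Ioi (0:ℝ), F r t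
      = (1 / s) ^ γ * (k * (1 / s) ^ β) ^ r := by
    intro r
    rw [hF]
    simp only
    rw [integral_const_mul _ _, hval r, ← hpow k r]
    field_simp
  have hnorm : ∀ r : ℕ, ∫ t in Ioi (0:ℝ), ‖F r t‖
      = (1 / s) ^ γ * (|k| * (1 / s) ^ β) ^ r := by
    intro r
    have heq : ∀ t ∈ Ioi (0:ℝ), ‖F r t‖
        = (|k| ^ r / Real.Gamma (β * r + γ)) * (t ^ (β * r + γ - 1) * Real.exp (-(s * t))) := by
      intro t ht
      have h1 : (0:ℝ) < t := ht
      rw [hF]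
      simp only
      rw [Real.norm_eq_abs, abs_mul, abs_div, abs_pow, abs_of_pos (hGpos r),
        abs_of_pos (mul_pos (Real.rpow_pos_of_pos h1 _) (Real.exp_pos _))]
    rw [setIntegral_congr_fun measurableSet_Ioi heq, integral_const_mul _ _, hval r,
      ← hpow |k| r]
    field_simp
  have hx : |k| * (1 / s) ^ β < 1 := by
    rw [hinv, mul_one_div, div_lt_one hsb]; exact hks
  have hsum : Summable fun r : ℕ => ∫ t in Ioi (0:ℝ), ‖F r t‖ := by
    rw [show (fun r : ℕ => ∫ t in Ioi (0:ℝ), ‖F r t‖)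
      = fun r : ℕ => (1 / s) ^ γ * (|k| * (1 / s) ^ β) ^ r from funext hnorm]
    exact (summable_geometric_of_lt_one (by positivity) hx).mul_left _
  have key : (∫ t in Ioi (0:ℝ),
        Real.exp (-s * t) * t ^ (γ - 1) * mittagLeffler β γ (k * t ^ β))
      = ∑' r : ℕ, ∫ t in Ioi (0:ℝ), F r t := by
    rw [MeasureTheory.integral_tsum_of_summable_integral_norm hFint hsum]
    apply setIntegral_congr_fun measurableSet_Ioi
    intro t ht
    have h1 : (0:ℝ) < t := ht
    dsimp only
    rw [mittagLeffler', ← tsum_mul_left]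
    apply tsum_congr
    intro r
    rw [hF]
    simp only
    rw [mul_pow, ← Real.rpow_natCast (t ^ β) r, ← Real.rpow_mul h1.le,
      show β * (r:ℝ) + γ - 1 = β * (r:ℝ) + (γ - 1) by ring, Real.rpow_add h1, neg_mul]
    field_simp
  rw [key]
  have : (∑' r : ℕ, ∫ t in Ioi (0:ℝ), F r t)
      = (1 / s) ^ γ * (1 - k * (1 / s) ^ β)⁻¹ := by
    rw [show (fun r : ℕ => ∫ t in Ioi (0:ℝ), F r t)
      = fun r : ℕ => (1 / s) ^ γ * (k * (1 / s) ^ β) ^ r from funext hFval,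
      tsum_mul_left, tsum_geometric_of_norm_lt_one (by
        rw [Real.norm_eq_abs, abs_mul, abs_of_pos (Real.rpow_pos_of_pos (by positivity) β)]
        exact hx)]
  have hginv : (1 / s : ℝ) ^ γ = 1 / s ^ γ := by
    rw [Real.div_rpow zero_le_one hs.le, Real.one_rpow]
  have hsg : (0:ℝ) < s ^ γ := Real.rpow_pos_of_pos hs γ
  rw [this, hinv, Real.rpow_sub hs, hginv]
  rw [show (1 : ℝ) - k * (1 / s ^ β) = (s ^ β - k) / s ^ β by field_simp]
  field_simp
end

section
/- (Invariant subspace theorem for scalar time-fractional PDEs.) Let α ∈ (0,1), m ∈ ℕ, λ₀,…,λ_m ∈ ℝ, and n ≥ 1. Let φ₁,…,φₙ : ℝ → ℝ, let Ĝ be a map from real-valued functions on ℝ to real-valued functions on ℝ, and let Φ₁,…,Φₙ : ℝⁿ → ℝ be such that Ĝ[Σ_{j=1}^n a_j φ_j] = Σ_{j=1}^n Φ_j(a₁,…,aₙ) φ_j for every (a₁,…,aₙ) ∈ ℝⁿ (i.e. the linear span of φ₁,…,φₙ is invariant under Ĝ). Let A₁,…,Aₙ : [0,∞) → ℝ be (m+1)-times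 continuously differentiable functions satisfying the system of fractional ODEs Σ_{i=0}^m λ_i (1/Γ(1-α)) ∫₀ᵗ A_j^{(i+1)}(s) (t-s)^{-α} ds = Φ_j(A₁(t),…,Aₙ(t)) for all t > 0 and j = 1,…,n. Then u(x,t) := Σ_{j=1}^n A_j(t) φ_j(x) satisfies Σ_{i=0}^m λ_i (1/Γ(1-α)) ∫₀ᵗ (∂^{i+1}/∂s^{i+1}) u(x,s) (t-s)^{-α} ds = Ĝ[u(·,t)](x) for all x ∈ ℝ and t > 0. -/
open MeasureTheory intervalIntegral Set

private lemma myIteratedDerivWithin_sum {ι : Type*} (u : Finset ι) {f : ι → ℝ → ℝ}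
    {s : Set ℝ} (hs : UniqueDiffOn ℝ s) {x : ℝ} (hx : x ∈ s) {k : ℕ}
    (h : ∀ j ∈ u, ContDiffOn ℝ k (f j) s) :
    iteratedDerivWithin k (fun y => ∑ j ∈ u, f j y) s x
      = ∑ j ∈ u, iteratedDerivWithin k (f j) s x := by
  simp only [iteratedDerivWithin]
  rw [show (fun y => ∑ j ∈ u, f j y) = ∑ j ∈ u, f j from by ext y; simp,
    iteratedFDerivWithin_sum_apply hs hx (fun j hj => h j hj x hx)]
  simp

private lemma myIteratedDerivWithin_eq_iteratedDeriv (k : ℕ) (f : ℝ → ℝ) {s : ℝ}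
    (hs : 0 < s) :
    iteratedDerivWithin k f (Set.Ici 0) s = iteratedDeriv k f s := by
  rw [← iteratedDerivWithin_univ]
  simp only [iteratedDerivWithin]
  congr 1
  have h : Set.Ici (0 : ℝ) = Set.univ ∩ Set.Ici 0 := by simp
  rw [h, iteratedFDerivWithin_inter (Ici_mem_nhds hs)]




/-- **Invariant subspace theorem for scalar time-fractional PDEs.**
If the span of `φ₁,…,φₙ` is invariant under the operator `G`, i.e.
`G[Σⱼ aⱼ φⱼ] = Σⱼ Φⱼ(a) φⱼ`, and the coefficient functions `Aⱼ` solve the system of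
fractional ODEs `Σᵢ λᵢ (C^(α+i) Aⱼ)(t) = Φⱼ(A₁(t),…,Aₙ(t))`, then
`u(x,t) = Σⱼ Aⱼ(t) φⱼ(x)` solves `Σᵢ λᵢ (C_t^(α+i) u)(x,t) = G[u(·,t)](x)`. -/
theorem invariant_subspace_scalar (α : ℝ) (hα : α ∈ Set.Ioo (0 : ℝ) 1)
    (m : ℕ) (lam : Fin (m + 1) → ℝ) (n : ℕ) (hn : 1 ≤ n)
    (φ : Fin n → ℝ → ℝ) (G : (ℝ → ℝ) → (ℝ → ℝ)) (Φ : Fin n → (Fin n → ℝ) → ℝ)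
    (hinv : ∀ a : Fin n → ℝ,
      G (fun x => ∑ j, a j * φ j x) = fun x => ∑ j, Φ j a * φ j x)
    (A : Fin n → ℝ → ℝ)
    (hA : ∀ j, ContDiffOn ℝ (m + 1) (A j) (Set.Ici (0 : ℝ)))
    (hode : ∀ t : ℝ, 0 < t → ∀ j : Fin n,
      ∑ i : Fin (m + 1),
          lam i * ((1 / Real.Gamma (1 - α)) *
            ∫ s in (0:ℝ)..t, iteratedDeriv ((i : ℕ) + 1) (A j) s * (t - s) ^ (-α))
        = Φ j fun j' => A j' t) :
    ∀ x : ℝ, ∀ t : ℝ, 0 < t →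
      ∑ i : Fin (m + 1),
          lam i * ((1 / Real.Gamma (1 - α)) *
            ∫ s in (0:ℝ)..t,
              iteratedDeriv ((i : ℕ) + 1) (fun s' => ∑ j, A j s' * φ j x) s *
                (t - s) ^ (-α))
        = G (fun x' => ∑ j, A j t * φ j x') x := by
  intro x t ht
  set c : ℝ := 1 / Real.Gamma (1 - α) with hc
  -- integrability of the weight
  have hw : IntervalIntegrable (fun s => (t - s) ^ (-α)) volume 0 t := by
    have h1 : IntervalIntegrable (fun s : ℝ => s ^ (-α)) volume (t - t) (t - 0) :=
      intervalIntegrable_rpow' (by linarith [hα.2])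
    simpa using (h1.comp_sub_left t).symm
  have hcd : ∀ (j : Fin n) (k : ℕ), k ≤ m + 1 → ContDiffOn ℝ k (A j) (Set.Ici 0) := by
    intro j k hk
    exact (hA j).of_le (by exact_mod_cast hk)
  have hne : ∀ᵐ s ∂(volume : Measure ℝ), s ≠ t := by
    rw [MeasureTheory.ae_iff]
    simp only [ne_eq, not_not, Set.setOf_eq_eq_singleton]
    exact measure_singleton t
  -- integrability of each summand
  have hInt : ∀ (i : Fin (m + 1)) (j : Fin n),
      IntervalIntegrable (fun s => iteratedDeriv ((i : ℕ) + 1) (A j) s * (t - s) ^ (-α))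
        volume 0 t := by
    intro i j
    have hle : (i : ℕ) + 1 ≤ m + 1 := Nat.succ_le_succ (Nat.le_of_lt_succ i.isLt)
    have hcont : ContinuousOn (iteratedDerivWithin ((i : ℕ) + 1) (A j) (Set.Ici 0))
        (Set.uIcc 0 t) := by
      refine ((hcd j _ hle).continuousOn_iteratedDerivWithin le_rfl
        (uniqueDiffOn_Ici 0)).mono ?_
      rw [Set.uIcc_of_le ht.le]; exact Set.Icc_subset_Ici_self
    refine (hw.continuousOn_mul hcont).congr ?_
    intro s hs
    dsimp only
    rw [Set.uIoc_of_le ht.le] at hs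
    rw [myIteratedDerivWithin_eq_iteratedDeriv _ _ hs.1]
  -- pointwise identity
  have key : ∀ (k : ℕ), k ≤ m + 1 → ∀ s : ℝ, s ∈ Set.Ioo (0:ℝ) t →
      iteratedDeriv k (fun s' => ∑ j, A j s' * φ j x) s
        = ∑ j, iteratedDeriv k (A j) s * φ j x := by
    intro k hk s hs
    have hmem : s ∈ Set.Ici (0:ℝ) := le_of_lt hs.1
    rw [← myIteratedDerivWithin_eq_iteratedDeriv k _ hs.1]
    have hfun : (fun s' => ∑ j, A j s' * φ j x) = (fun s' => ∑ j, φ j x * A j s') := by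
      funext y; exact Finset.sum_congr rfl fun j _ => mul_comm _ _
    rw [hfun, myIteratedDerivWithin_sum Finset.univ (uniqueDiffOn_Ici 0) hmem
      (fun j _ => (contDiffOn_const.mul (hcd j k hk)))]
    refine Finset.sum_congr rfl fun j _ => ?_
    rw [iteratedDerivWithin_const_mul hmem (uniqueDiffOn_Ici 0) _ ((hcd j k hk) s hmem),
      myIteratedDerivWithin_eq_iteratedDeriv k _ hs.1, mul_comm]
  have hIeq : ∀ i : Fin (m + 1),
      (∫ s in (0:ℝ)..t, iteratedDeriv ((i:ℕ)+1) (fun s' => ∑ j, A j s' * φ j x) s * (t-s)^(-α))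
        = ∑ j, φ j x * ∫ s in (0:ℝ)..t, iteratedDeriv ((i:ℕ)+1) (A j) s * (t-s)^(-α) := by
    intro i
    have hle : (i : ℕ) + 1 ≤ m + 1 := Nat.succ_le_succ (Nat.le_of_lt_succ i.isLt)
    have h1 : (∫ s in (0:ℝ)..t,
          iteratedDeriv ((i:ℕ)+1) (fun s' => ∑ j, A j s' * φ j x) s * (t-s)^(-α))
        = ∫ s in (0:ℝ)..t, ∑ j, (iteratedDeriv ((i:ℕ)+1) (A j) s * (t-s)^(-α)) * φ j x := by
      refine intervalIntegral.integral_congr_ae ?_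
      filter_upwards [hne] with s hst hmem
      rw [Set.uIoc_of_le ht.le] at hmem
      rw [key _ hle s ⟨hmem.1, lt_of_le_of_ne hmem.2 hst⟩, Finset.sum_mul]
      exact Finset.sum_congr rfl fun j _ => by ring
    rw [h1, intervalIntegral.integral_finset_sum fun j _ => (hInt i j).mul_const (φ j x)]
    refine Finset.sum_congr rfl fun j _ => ?_
    rw [intervalIntegral.integral_mul_const, mul_comm]
  -- assemble
  have hG := congrFun (hinv fun j' => A j' t) x
  calc ∑ i : Fin (m+1), lam i * (c * ∫ s in (0:ℝ)..t,
          iteratedDeriv ((i:ℕ)+1) (fun s' => ∑ j, A j s' * φ j x) s * (t-s)^(-α))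
      = ∑ j, (∑ i : Fin (m+1), lam i *
          (c * ∫ s in (0:ℝ)..t, iteratedDeriv ((i:ℕ)+1) (A j) s * (t-s)^(-α))) * φ j x := by
        simp only [hIeq, Finset.mul_sum, Finset.sum_mul]
        rw [Finset.sum_comm]
        exact Finset.sum_congr rfl fun j _ => Finset.sum_congr rfl fun i _ => by ring
    _ = ∑ j, Φ j (fun j' => A j' t) * φ j x :=
        Finset.sum_congr rfl fun j _ => by rw [hode t ht j]
    _ = G (fun x' => ∑ j, A j t * φ j x') x := hG.symm
end

section
/- Let n ∈ ℕ, n ≥ 1, let a₀,…,aₙ, b₁,…,b_{n+1}, k, k₀ ∈ ℝ with a_r k = b_{r+1} for r = 1,…,n, and set p(u) = Σ_{r=0}^n a_r u^r and q(u) = Σ_{r=1}^{n+1} b_r u^r + b₀ (b₀ ∈ ℝ). Then u(x,t) = k₀ e^{(a₀k² - b₁k)t + kx} is an exact solution of the classical diffusion–convection equation: for all x ∈ ℝ and t > 0, ∂u/∂t = p'(u) (∂u/∂x)² + p(u) ∂²u/∂x² - q'(u) ∂u/∂x. -/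
/-- The exact solution `u(x,t) = k₀ e^{(a₀k² - b₁k)t + kx}`. -/
noncomputable def uSol (a b : ℕ → ℝ) (k k₀ : ℝ) (x t : ℝ) : ℝ :=
  k₀ * Real.exp ((a 0 * k ^ 2 - b 1 * k) * t + k * x)

lemma uSol_deriv_t (a b : ℕ → ℝ) (k k₀ x t : ℝ) :
    deriv (fun s => uSol a b k k₀ x s) t =
      (a 0 * k ^ 2 - b 1 * k) * uSol a b k k₀ x t := by
  have h : HasDerivAt (fun s => uSol a b k k₀ x s)
      (k₀ * (Real.exp ((a 0 * k ^ 2 - b 1 * k) * t + k * x) * (a 0 * k ^ 2 - b 1 * k))) t := by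
    have h1 : HasDerivAt (fun s : ℝ => (a 0 * k ^ 2 - b 1 * k) * s + k * x)
        (a 0 * k ^ 2 - b 1 * k) t := by
      simpa using ((hasDerivAt_id t).const_mul (a 0 * k ^ 2 - b 1 * k)).add_const (k * x)
    exact h1.exp.const_mul k₀
  rw [h.deriv, uSol]; ring

lemma uSol_deriv_x (a b : ℕ → ℝ) (k k₀ x t : ℝ) :
    deriv (fun y => uSol a b k k₀ y t) x = k * uSol a b k k₀ x t := by
  have h : HasDerivAt (fun y => uSol a b k k₀ y t)
      (k₀ * (Real.exp ((a 0 * k ^ 2 - b 1 * k) * t + k * x) * k)) x := by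
    have h1 : HasDerivAt (fun y : ℝ => (a 0 * k ^ 2 - b 1 * k) * t + k * y) k x := by
      simpa using (((hasDerivAt_id x).const_mul k).const_add ((a 0 * k ^ 2 - b 1 * k) * t))
    exact h1.exp.const_mul k₀
  rw [h.deriv, uSol]; ring

lemma key_alg (n : ℕ) (hn : 1 ≤ n) (a b : ℕ → ℝ) (k : ℝ)
    (hab : ∀ r : ℕ, 1 ≤ r → r ≤ n → a r * k = b (r + 1)) (u : ℝ) :
    (a 0 * k ^ 2 - b 1 * k) * u =
      (∑ r ∈ Finset.Icc 1 n, (r : ℝ) * a r * u ^ (r - 1)) * (k * u) ^ 2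
        + (∑ r ∈ Finset.range (n + 1), a r * u ^ r) * (k * (k * u))
        - (∑ r ∈ Finset.Icc 1 (n + 1), (r : ℝ) * b r * u ^ (r - 1)) * (k * u) := by
  induction n, hn using Nat.le_induction with
  | base =>
    have h1 : a 1 * k = b 2 := hab 1 le_rfl le_rfl
    rw [show Finset.Icc 1 1 = {1} from rfl, show Finset.Icc 1 2 = {1, 2} from rfl,
      Finset.sum_singleton, Finset.sum_pair (by norm_num : (1:ℕ) ≠ 2),
      Finset.sum_range_succ, Finset.sum_range_succ, Finset.sum_range_zero]
    norm_num
    linear_combination (-2 * k * u ^ 2) * h1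
  | succ m hm ih =>
    have hb : b (m + 2) = a (m + 1) * k := (hab (m + 1) (by omega) le_rfl).symm
    have ih' := ih (fun r h1 h2 => hab r h1 (by omega))
    rw [Finset.sum_Icc_succ_top (by omega : 1 ≤ m + 1),
      Finset.sum_Icc_succ_top (by omega : 1 ≤ m + 2), Finset.sum_range_succ]
    have e1 : (m + 1) - 1 = m := by omega
    have e2 : (m + 2) - 1 = m + 1 := by omega
    rw [e1, e2, hb]
    push_cast
    linear_combination ih'

/-- **Exact solution of the classical diffusion–convection equation.**
With `p(u) = Σ_{r=0}^n aᵣ uʳ`, `q(u) = Σ_{r=1}^{n+1} bᵣ uʳ + b₀`, and `aᵣ k = b_{r+1}`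
for `r = 1,…,n`, the function `u(x,t) = k₀ e^{(a₀k² - b₁k)t + kx}` satisfies
`∂u/∂t = p'(u) (∂u/∂x)² + p(u) ∂²u/∂x² - q'(u) ∂u/∂x` for all `x ∈ ℝ`, `t > 0`. -/
theorem diffusion_convection_exact (n : ℕ) (hn : 1 ≤ n) (a b : ℕ → ℝ) (k k₀ : ℝ)
    (hab : ∀ r : ℕ, 1 ≤ r → r ≤ n → a r * k = b (r + 1)) :
    ∀ x : ℝ, ∀ t : ℝ, 0 < t →
      deriv (fun s => uSol a b k k₀ x s) t =
        (∑ r ∈ Finset.Icc 1 n, (r : ℝ) * a r * (uSol a b k k₀ x t) ^ (r - 1)) *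
            (deriv (fun y => uSol a b k k₀ y t) x) ^ 2
          + (∑ r ∈ Finset.range (n + 1), a r * (uSol a b k k₀ x t) ^ r) *
            deriv (fun y => deriv (fun y' => uSol a b k k₀ y' t) y) x
          - (∑ r ∈ Finset.Icc 1 (n + 1), (r : ℝ) * b r * (uSol a b k k₀ x t) ^ (r - 1)) *
            deriv (fun y => uSol a b k k₀ y t) x := by
  intro x t ht
  have hxx : deriv (fun y => deriv (fun y' => uSol a b k k₀ y' t) y) x =
      k * (k * uSol a b k k₀ x t) := by
    have : (fun y => deriv (fun y' => uSol a b k k₀ y' t) y) =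
        fun y => k * uSol a b k k₀ y t := funext fun y => uSol_deriv_x a b k k₀ y t
    rw [this, deriv_const_mul _ ?_, uSol_deriv_x]
    · exact (Real.differentiable_exp.comp (by fun_prop)).const_mul k₀ |>.differentiableAt
  rw [uSol_deriv_t, uSol_deriv_x a b k k₀ x t, hxx]
  exact key_alg n hn a b k hab (uSol a b k k₀ x t)
end

section
/- Let k₁, k₂, k₃, k₄ ∈ ℝ. Then the pair u₁(x,t) = k₁ + k₄ t - k₂² t²/2 + k₂ x, u₂(x,t) = k₃ - k₂ (k₁ + (k₄/2) t - (k₂²/6) t²) t + (k₄ - k₂² t) x is an exact solution of the classical system of stationary transonic plane-parallel gas flow: for all x ∈ ℝ and t > 0, ∂u₁/∂t = ∂u₂/∂x and ∂u₂/∂t = -u₁ ∂u₁/∂x. -/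
/-- The component `u₁(x,t) = k₁ + k₄ t - k₂² t²/2 + k₂ x`. -/
noncomputable def u1Sol (k₁ k₂ k₄ : ℝ) (x t : ℝ) : ℝ :=
  k₁ + k₄ * t - k₂ ^ 2 * t ^ 2 / 2 + k₂ * x

/-- The component `u₂(x,t) = k₃ - k₂(k₁ + (k₄/2)t - (k₂²/6)t²)t + (k₄ - k₂² t) x`. -/
noncomputable def u2Sol (k₁ k₂ k₃ k₄ : ℝ) (x t : ℝ) : ℝ :=
  k₃ - k₂ * (k₁ + (k₄ / 2) * t - (k₂ ^ 2 / 6) * t ^ 2) * t + (k₄ - k₂ ^ 2 * t) * x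

/-- **Exact solution of the classical system of stationary transonic plane-parallel
gas flow**: `∂u₁/∂t = ∂u₂/∂x` and `∂u₂/∂t = -u₁ ∂u₁/∂x` for all `x ∈ ℝ`, `t > 0`. -/
theorem classical_gas_flow_exact (k₁ k₂ k₃ k₄ : ℝ) :
    ∀ x : ℝ, ∀ t : ℝ, 0 < t →
      deriv (fun s => u1Sol k₁ k₂ k₄ x s) t = deriv (fun y => u2Sol k₁ k₂ k₃ k₄ y t) x ∧
      deriv (fun s => u2Sol k₁ k₂ k₃ k₄ x s) t =
        -u1Sol k₁ k₂ k₄ x t * deriv (fun y => u1Sol k₁ k₂ k₄ y t) x := by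
  intro x t _
  have h1t : deriv (fun s => u1Sol k₁ k₂ k₄ x s) t = k₄ - k₂ ^ 2 * t := by
    have : HasDerivAt (fun s => u1Sol k₁ k₂ k₄ x s) (k₄ - k₂ ^ 2 * t) t := by
      unfold u1Sol
      have : HasDerivAt (fun s : ℝ => k₁ + k₄ * s - k₂ ^ 2 * s ^ 2 / 2 + k₂ * x)
          (k₄ - k₂ ^ 2 * t) t := by
        have h := ((hasDerivAt_id t).const_mul k₄).const_add k₁
        have h2 := (((hasDerivAt_pow 2 t)).const_mul (k₂ ^ 2)).div_const 2
        have := (h.sub h2).add_const (k₂ * x)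
        refine this.congr_deriv ?_
        ring_nf
      simpa using this
    exact this.deriv
  have h1x : deriv (fun y => u1Sol k₁ k₂ k₄ y t) x = k₂ := by
    have : HasDerivAt (fun y => u1Sol k₁ k₂ k₄ y t) k₂ x := by
      unfold u1Sol
      simpa using (((hasDerivAt_id x).const_mul k₂).const_add
        (k₁ + k₄ * t - k₂ ^ 2 * t ^ 2 / 2))
    exact this.deriv
  have h2x : deriv (fun y => u2Sol k₁ k₂ k₃ k₄ y t) x = k₄ - k₂ ^ 2 * t := by
    have : HasDerivAt (fun y => u2Sol k₁ k₂ k₃ k₄ y t) (k₄ - k₂ ^ 2 * t) x := by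
      unfold u2Sol
      simpa using (((hasDerivAt_id x).const_mul (k₄ - k₂ ^ 2 * t)).const_add
        (k₃ - k₂ * (k₁ + (k₄ / 2) * t - (k₂ ^ 2 / 6) * t ^ 2) * t))
    exact this.deriv
  have h2t : deriv (fun s => u2Sol k₁ k₂ k₃ k₄ x s) t =
      -(k₁ + k₄ * t - k₂ ^ 2 * t ^ 2 / 2 + k₂ * x) * k₂ := by
    have key : HasDerivAt (fun s => u2Sol k₁ k₂ k₃ k₄ x s)
        (-(k₁ + k₄ * t - k₂ ^ 2 * t ^ 2 / 2 + k₂ * x) * k₂) t := by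
      unfold u2Sol
      have hp : HasDerivAt (fun s : ℝ =>
          k₃ - k₂ * (k₁ + (k₄ / 2) * s - (k₂ ^ 2 / 6) * s ^ 2) * s + (k₄ - k₂ ^ 2 * s) * x)
          (-(k₁ + k₄ * t - k₂ ^ 2 * t ^ 2 / 2 + k₂ * x) * k₂) t := by
        have hinner : HasDerivAt (fun s : ℝ => k₁ + (k₄ / 2) * s - (k₂ ^ 2 / 6) * s ^ 2)
            (k₄ / 2 - k₂ ^ 2 / 6 * (2 * t)) t := by
          have h1 := ((hasDerivAt_id t).const_mul (k₄ / 2)).const_add k₁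
          have h2 := (hasDerivAt_pow 2 t).const_mul (k₂ ^ 2 / 6)
          refine (h1.sub h2).congr_deriv ?_
          ring
        have hmid : HasDerivAt (fun s : ℝ =>
            k₂ * (k₁ + (k₄ / 2) * s - (k₂ ^ 2 / 6) * s ^ 2) * s)
            (k₂ * (k₄ / 2 - k₂ ^ 2 / 6 * (2 * t)) * t
              + k₂ * (k₁ + (k₄ / 2) * t - (k₂ ^ 2 / 6) * t ^ 2) * 1) t := by
          exact ((hinner.const_mul k₂).mul (hasDerivAt_id t))
        have hlast : HasDerivAt (fun s : ℝ => (k₄ - k₂ ^ 2 * s) * x) (-(k₂ ^ 2) * x) t := by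
          have := (((hasDerivAt_id t).const_mul (k₂ ^ 2)).const_sub k₄).mul_const x
          simpa using this
        have := ((hmid.const_sub k₃).add hlast)
        refine this.congr_deriv ?_
        ring
      exact hp
    exact key.deriv
  refine ⟨by rw [h1t, h2x], ?_⟩
  rw [h2t, h1x]
  simp [u1Sol]
end
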